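/- Let γ > 0, n ∈ ℕ, and fix w ∈ 𝔻. Define g_w = (γ+n+2)/(γ+n+1)·∏_{j=0}^{n-1}(γ+j+1)(γ+j+2)·l₁ − (2γ+2n+3)/(γ+n+1)·∏_{j=0}^{n-1}(γ+j)(γ+j+2)·l₂ + ∏_{j=0}^{n-1}(γ+j)(γ+j+1)·l₃, where l_i(z) = (1-|w|²)^i/(1-conj(w)·z)^{γ+i-1}. Then g_w^{(n)}(w) = 0, g_w^{(n+2)}(w) = 0, and g_w^{(n+1)}(w) = −[∏_{j=0}^{n-1}(γ+j)(γ+j+1)(γ+j+2)]/(γ+n+1) · conj(w)^{n+1}/(1-|w|²)^{γ+n}. -/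

import Mathlib

open Complex Metric Finset

/-- The kernel `l_i(z) = (1-|w|²)^i / (1 - conj w · z)^(γ+i-1)`. -/
noncomputable def lKernel (w : ℂ) (γ : ℝ) (i : ℕ) (z : ℂ) : ℂ :=
  ((1 - ‖w‖ ^ 2 : ℝ) : ℂ) ^ i / (1 - (starRingEnd ℂ) w * z) ^ ((γ : ℂ) + i - 1)

/-- The test function `g_w`. -/
noncomputable def gTest (w : ℂ) (γ : ℝ) (n : ℕ) (z : ℂ) : ℂ :=
  ((γ : ℂ) + n + 2) / ((γ : ℂ) + n + 1) *
      (∏ j ∈ range n, (((γ : ℂ) + j + 1) * ((γ : ℂ) + j + 2))) * lKernel w γ 1 z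
  - (2 * (γ : ℂ) + 2 * n + 3) / ((γ : ℂ) + n + 1) *
      (∏ j ∈ range n, (((γ : ℂ) + j) * ((γ : ℂ) + j + 2))) * lKernel w γ 2 z
  + (∏ j ∈ range n, (((γ : ℂ) + j) * ((γ : ℂ) + j + 1))) * lKernel w γ 3 z

private lemma hasDerivAt_term (c K t : ℂ) (k : ℕ) (z : ℂ)
    (hz : 1 - c * z ∈ Complex.slitPlane) :
    HasDerivAt (fun z => K * (1 - c * z) ^ (-t - (k : ℂ)))
      (K * (c * (t + k)) * (1 - c * z) ^ (-t - ((k : ℂ) + 1))) z := by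
  have h0 : HasDerivAt (fun z : ℂ => 1 - c * z) (-c) z := by
    simpa using ((hasDerivAt_id z).const_mul c).const_sub 1
  have h1 := (h0.cpow_const (c := -t - (k : ℂ)) hz).const_mul K
  refine h1.congr_deriv ?_
  rw [show -t - ((k : ℂ) + 1) = -t - (k : ℂ) - 1 by ring]
  ring

private lemma iteratedDeriv_three (c K₁ K₂ K₃ t₁ t₂ t₃ : ℂ) (k : ℕ) :
    ∀ z, 1 - c * z ∈ Complex.slitPlane →
    iteratedDeriv k (fun z => K₁ * (1 - c * z) ^ (-t₁) - K₂ * (1 - c * z) ^ (-t₂)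
        + K₃ * (1 - c * z) ^ (-t₃)) z
    = K₁ * (c ^ k * ∏ j ∈ range k, (t₁ + j)) * (1 - c * z) ^ (-t₁ - (k : ℂ))
      - K₂ * (c ^ k * ∏ j ∈ range k, (t₂ + j)) * (1 - c * z) ^ (-t₂ - (k : ℂ))
      + K₃ * (c ^ k * ∏ j ∈ range k, (t₃ + j)) * (1 - c * z) ^ (-t₃ - (k : ℂ)) := by
  induction k with
  | zero => intro z hz; simp
  | succ k ih =>
    intro z hz
    rw [iteratedDeriv_succ]
    have hU : IsOpen {z : ℂ | 1 - c * z ∈ Complex.slitPlane} :=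
      Complex.isOpen_slitPlane.preimage (by continuity)
    have hev : iteratedDeriv k (fun z => K₁ * (1 - c * z) ^ (-t₁) - K₂ * (1 - c * z) ^ (-t₂)
        + K₃ * (1 - c * z) ^ (-t₃)) =ᶠ[nhds z]
        (fun z => K₁ * (c ^ k * ∏ j ∈ range k, (t₁ + j)) * (1 - c * z) ^ (-t₁ - (k : ℂ))
      - K₂ * (c ^ k * ∏ j ∈ range k, (t₂ + j)) * (1 - c * z) ^ (-t₂ - (k : ℂ))
      + K₃ * (c ^ k * ∏ j ∈ range k, (t₃ + j)) * (1 - c * z) ^ (-t₃ - (k : ℂ))) :=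
      Filter.eventuallyEq_of_mem (hU.mem_nhds hz) (fun u hu => ih u hu)
    rw [hev.deriv_eq]
    have h := ((hasDerivAt_term c (K₁ * (c ^ k * ∏ j ∈ range k, (t₁ + j))) t₁ k z hz).sub
        (hasDerivAt_term c (K₂ * (c ^ k * ∏ j ∈ range k, (t₂ + j))) t₂ k z hz)).add
        (hasDerivAt_term c (K₃ * (c ^ k * ∏ j ∈ range k, (t₃ + j))) t₃ k z hz)
    refine h.deriv.trans ?_
    rw [prod_range_succ, prod_range_succ, prod_range_succ]
    push_cast
    ring

private lemma eval_comb (B c x a₁ a₂ a₃ : ℂ) (hB : B ≠ 0) (k : ℕ) :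
    a₁ * B ^ (1:ℕ) * (c ^ k * ∏ j ∈ range k, (x + ((1:ℕ):ℂ) - 1 + j))
        * B ^ (-(x + ((1:ℕ):ℂ) - 1) - (k:ℂ))
    - a₂ * B ^ (2:ℕ) * (c ^ k * ∏ j ∈ range k, (x + ((2:ℕ):ℂ) - 1 + j))
        * B ^ (-(x + ((2:ℕ):ℂ) - 1) - (k:ℂ))
    + a₃ * B ^ (3:ℕ) * (c ^ k * ∏ j ∈ range k, (x + ((3:ℕ):ℂ) - 1 + j))
        * B ^ (-(x + ((3:ℕ):ℂ) - 1) - (k:ℂ))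
    = c ^ k * (a₁ * ∏ j ∈ range k, (x + j) - a₂ * ∏ j ∈ range k, (x + j + 1)
        + a₃ * ∏ j ∈ range k, (x + j + 2)) * B ^ (1 - x - (k:ℂ)) := by
  have hp : ∀ (i : ℕ) (e : ℂ), B ^ i * B ^ e = B ^ ((i:ℂ) + e) := fun i e => by
    rw [← Complex.cpow_natCast, ← Complex.cpow_add _ _ hB]
  have e1 : B ^ (1:ℕ) * B ^ (-(x + ((1:ℕ):ℂ) - 1) - (k:ℂ)) = B ^ (1 - x - (k:ℂ)) := by
    rw [hp]; congr 1; push_cast; ring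
  have e2 : B ^ (2:ℕ) * B ^ (-(x + ((2:ℕ):ℂ) - 1) - (k:ℂ)) = B ^ (1 - x - (k:ℂ)) := by
    rw [hp]; congr 1; push_cast; ring
  have e3 : B ^ (3:ℕ) * B ^ (-(x + ((3:ℕ):ℂ) - 1) - (k:ℂ)) = B ^ (1 - x - (k:ℂ)) := by
    rw [hp]; congr 1; push_cast; ring
  have p1 : ∏ j ∈ range k, (x + ((1:ℕ):ℂ) - 1 + j) = ∏ j ∈ range k, (x + j) :=
    Finset.prod_congr rfl (fun j _ => by push_cast; ring)
  have p2 : ∏ j ∈ range k, (x + ((2:ℕ):ℂ) - 1 + j) = ∏ j ∈ range k, (x + j + 1) :=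
    Finset.prod_congr rfl (fun j _ => by push_cast; ring)
  have p3 : ∏ j ∈ range k, (x + ((3:ℕ):ℂ) - 1 + j) = ∏ j ∈ range k, (x + j + 2) :=
    Finset.prod_congr rfl (fun j _ => by push_cast; ring)
  rw [p1, p2, p3]
  calc _ = (a₁ * (c ^ k * ∏ j ∈ range k, (x + j)))
            * (B ^ (1:ℕ) * B ^ (-(x + ((1:ℕ):ℂ) - 1) - (k:ℂ)))
        - (a₂ * (c ^ k * ∏ j ∈ range k, (x + j + 1)))
            * (B ^ (2:ℕ) * B ^ (-(x + ((2:ℕ):ℂ) - 1) - (k:ℂ)))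
        + (a₃ * (c ^ k * ∏ j ∈ range k, (x + j + 2)))
            * (B ^ (3:ℕ) * B ^ (-(x + ((3:ℕ):ℂ) - 1) - (k:ℂ))) := by ring
    _ = _ := by rw [e1, e2, e3]; ring

theorem gTest_derivs (γ : ℝ) (hγ : 0 < γ) (n : ℕ) (w : ℂ)
    (hw : w ∈ ball (0:ℂ) 1) :
    iteratedDeriv n (gTest w γ n) w = 0 ∧
    iteratedDeriv (n + 2) (gTest w γ n) w = 0 ∧
    iteratedDeriv (n + 1) (gTest w γ n) w =
      -((∏ j ∈ range n, (((γ : ℂ) + j) * ((γ : ℂ) + j + 1) * ((γ : ℂ) + j + 2))) /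
          ((γ : ℂ) + n + 1)) *
        ((starRingEnd ℂ) w) ^ (n + 1) /
        ((1 - ‖w‖ ^ 2 : ℝ) : ℂ) ^ ((γ : ℂ) + n) := by
  have hw1 : ‖w‖ < 1 := mem_ball_zero_iff.mp hw
  have hr : (0:ℝ) < 1 - ‖w‖ ^ 2 := by nlinarith [norm_nonneg w]
  have hB : ((1 - ‖w‖ ^ 2 : ℝ) : ℂ) ≠ 0 := by exact_mod_cast hr.ne'
  have hbw : 1 - (starRingEnd ℂ) w * w = ((1 - ‖w‖ ^ 2 : ℝ) : ℂ) := by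
    rw [mul_comm, Complex.mul_conj, Complex.normSq_eq_norm_sq]; push_cast; ring
  have hzw : 1 - (starRingEnd ℂ) w * w ∈ Complex.slitPlane := by
    rw [hbw]; exact Complex.ofReal_mem_slitPlane.mpr hr
  have hx1 : (γ:ℂ) + n + 1 ≠ 0 := by
    intro h
    have h2 := congrArg Complex.re h
    simp at h2
    have : (0:ℝ) ≤ (n:ℝ) := Nat.cast_nonneg n
    linarith
  have hg : gTest w γ n = fun z =>
      ((γ:ℂ) + n + 2) / ((γ:ℂ) + n + 1) *
          (∏ j ∈ range n, (((γ:ℂ) + j + 1) * ((γ:ℂ) + j + 2)))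
          * ((1 - ‖w‖ ^ 2 : ℝ) : ℂ) ^ (1:ℕ)
        * (1 - (starRingEnd ℂ) w * z) ^ (-((γ:ℂ) + ((1:ℕ):ℂ) - 1))
      - (2 * (γ:ℂ) + 2 * n + 3) / ((γ:ℂ) + n + 1) *
          (∏ j ∈ range n, (((γ:ℂ) + j) * ((γ:ℂ) + j + 2)))
          * ((1 - ‖w‖ ^ 2 : ℝ) : ℂ) ^ (2:ℕ)
        * (1 - (starRingEnd ℂ) w * z) ^ (-((γ:ℂ) + ((2:ℕ):ℂ) - 1))
      + (∏ j ∈ range n, (((γ:ℂ) + j) * ((γ:ℂ) + j + 1)))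
          * ((1 - ‖w‖ ^ 2 : ℝ) : ℂ) ^ (3:ℕ)
        * (1 - (starRingEnd ℂ) w * z) ^ (-((γ:ℂ) + ((3:ℕ):ℂ) - 1)) := by
    funext z
    simp only [gTest, lKernel, Complex.cpow_neg, div_eq_mul_inv]
    ring
  have hder : ∀ k : ℕ, iteratedDeriv k (gTest w γ n) w =
      ((starRingEnd ℂ) w) ^ k *
        (((γ:ℂ) + n + 2) / ((γ:ℂ) + n + 1) *
            (∏ j ∈ range n, (((γ:ℂ) + j + 1) * ((γ:ℂ) + j + 2)))
            * ∏ j ∈ range k, ((γ:ℂ) + j)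
          - (2 * (γ:ℂ) + 2 * n + 3) / ((γ:ℂ) + n + 1) *
            (∏ j ∈ range n, (((γ:ℂ) + j) * ((γ:ℂ) + j + 2)))
            * ∏ j ∈ range k, ((γ:ℂ) + j + 1)
          + (∏ j ∈ range n, (((γ:ℂ) + j) * ((γ:ℂ) + j + 1)))
            * ∏ j ∈ range k, ((γ:ℂ) + j + 2)) *
        ((1 - ‖w‖ ^ 2 : ℝ) : ℂ) ^ (1 - (γ:ℂ) - (k:ℂ)) := by
    intro k
    rw [hg, iteratedDeriv_three _ _ _ _ _ _ _ k w hzw, hbw]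
    exact eval_comb _ _ _ _ _ _ hB k
  refine ⟨?_, ?_, ?_⟩
  · rw [hder n]
    simp only [prod_mul_distrib]
    exact mul_eq_zero_of_left (mul_eq_zero_of_right _ (by field_simp [hx1]; push_cast; ring)) _
  · rw [hder (n+2)]
    rw [prod_range_succ, prod_range_succ, prod_range_succ,
        prod_range_succ, prod_range_succ, prod_range_succ]
    simp only [prod_mul_distrib]
    refine mul_eq_zero_of_left (mul_eq_zero_of_right _ ?_) _
    field_simp [hx1]
    push_cast
    ring
  · rw [hder (n+1)]
    rw [prod_range_succ, prod_range_succ, prod_range_succ]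
    rw [show (1:ℂ) - (γ:ℂ) - (((n+1 : ℕ)):ℂ) = -((γ:ℂ) + n) by push_cast; ring,
        Complex.cpow_neg]
    rw [div_eq_mul_inv]
    simp only [prod_mul_distrib]
    congr 1
    field_simp [hx1]
    ring
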